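/- For $\lambda < 0$, the function $F(x) = 2^{\lambda}\left(2\sin^{\lambda}(x/2) + \sin^{\lambda}(3x/2)\right)$ is convex on the interval $[\pi/3, \pi/2)$. -/

import Mathlib

open Real Set

lemma aux_convexOn_rpow_neg {p : ℝ} (hp : p < 0) :
    ConvexOn ℝ (Set.Ioi (0:ℝ)) (fun x : ℝ => x ^ p) := by
  have hd : ∀ x ∈ Set.Ioi (0:ℝ), HasDerivAt (fun x : ℝ => x ^ p) (p * x ^ (p - 1)) x :=
    fun x hx => Real.hasDerivAt_rpow_const (Or.inl (ne_of_gt hx))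
  apply convexOn_of_deriv2_nonneg' (convex_Ioi 0)
  · exact fun x hx => (hd x hx).differentiableAt.differentiableWithinAt
  · intro x hx
    have hev : deriv (fun x : ℝ => x ^ p) =ᶠ[nhds x] fun y => p * y ^ (p - 1) := by
      filter_upwards [IsOpen.mem_nhds isOpen_Ioi hx] with y hy
      exact Real.deriv_rpow_const y p
    have hdy : HasDerivAt (fun y : ℝ => p * y ^ (p - 1))
        (p * ((p - 1) * x ^ (p - 1 - 1))) x :=
      (Real.hasDerivAt_rpow_const (Or.inl (ne_of_gt hx))).const_mul p
    exact (hdy.differentiableAt.congr_of_eventuallyEq hev).differentiableWithinAt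
  · intro x hx
    have hev : deriv (fun x : ℝ => x ^ p) =ᶠ[nhds x] fun y => p * y ^ (p - 1) := by
      filter_upwards [IsOpen.mem_nhds isOpen_Ioi hx] with y hy
      exact Real.deriv_rpow_const y p
    have hdy : HasDerivAt (fun y : ℝ => p * y ^ (p - 1))
        (p * ((p - 1) * x ^ (p - 1 - 1))) x :=
      (Real.hasDerivAt_rpow_const (Or.inl (ne_of_gt hx))).const_mul p
    have : deriv^[2] (fun x : ℝ => x ^ p) x = p * ((p - 1) * x ^ (p - 1 - 1)) := by
      simp only [Function.iterate_succ, Function.iterate_zero, Function.comp_apply, id]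
      rw [hev.deriv_eq, hdy.deriv]
    rw [this]
    have h1 : (0:ℝ) < x ^ (p - 1 - 1) := Real.rpow_pos_of_pos hx _
    nlinarith [mul_pos (mul_pos_of_neg_of_neg hp (show p - 1 < 0 by linarith)) h1]

lemma aux_comp_rpow_neg {p : ℝ} (hp : p < 0) {s : Set ℝ} {f : ℝ → ℝ}
    (hf : ConcaveOn ℝ s f) (hpos : ∀ x ∈ s, 0 < f x) :
    ConvexOn ℝ s (fun x => f x ^ p) := by
  refine ⟨hf.1, fun x hx y hy a b ha hb hab => ?_⟩
  have h1 := hf.2 hx hy ha hb hab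
  have hpx := hpos x hx
  have hpy := hpos y hy
  simp only [smul_eq_mul] at *
  have hmid : 0 < a * f x + b * f y := by
    rcases ha.lt_or_eq with h | h
    · nlinarith [mul_pos h hpx, mul_nonneg hb hpy.le]
    · have hb1 : b = 1 := by linarith
      nlinarith
  calc f (a * x + b * y) ^ p ≤ (a * f x + b * f y) ^ p :=
        Real.rpow_le_rpow_of_nonpos hmid h1 hp.le
    _ ≤ a * f x ^ p + b * f y ^ p := by
        have := (aux_convexOn_rpow_neg hp).2 (Set.mem_Ioi.2 hpx) (Set.mem_Ioi.2 hpy) ha hb hab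
        simpa using this

lemma aux_sin_concave (c : ℝ) {s : Set ℝ} (hs : Convex ℝ s)
    (hmap : ∀ x ∈ s, c * x ∈ Set.Icc 0 Real.pi) :
    ConcaveOn ℝ s (fun x => Real.sin (c * x)) := by
  refine ⟨hs, fun x hx y hy a b ha hb hab => ?_⟩
  have := strictConcaveOn_sin_Icc.concaveOn.2 (hmap x hx) (hmap y hy) ha hb hab
  simp only [smul_eq_mul] at *
  calc a * Real.sin (c * x) + b * Real.sin (c * y)
      ≤ Real.sin (a * (c * x) + b * (c * y)) := this
    _ = Real.sin (c * (a * x + b * y)) := by ring_nf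

theorem stmt_12 (lam : ℝ) (hlam : lam < 0) :
    ConvexOn ℝ (Set.Ico (Real.pi / 3) (Real.pi / 2))
      (fun x : ℝ => (2 : ℝ) ^ lam *
        (2 * Real.sin (x / 2) ^ lam + Real.sin (3 * x / 2) ^ lam)) := by
  have hpi := Real.pi_pos
  set s := Set.Ico (Real.pi / 3) (Real.pi / 2) with hs
  have hsc : Convex ℝ s := convex_Ico _ _
  have h1map : ∀ x ∈ s, (1/2 : ℝ) * x ∈ Set.Icc 0 Real.pi := by
    rintro x ⟨h1, h2⟩; constructor <;> [linarith; linarith]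
  have h2map : ∀ x ∈ s, (3/2 : ℝ) * x ∈ Set.Icc 0 Real.pi := by
    rintro x ⟨h1, h2⟩; constructor <;> [linarith; linarith]
  have hc1 : ConcaveOn ℝ s (fun x => Real.sin ((1/2 : ℝ) * x)) :=
    aux_sin_concave _ hsc h1map
  have hc2 : ConcaveOn ℝ s (fun x => Real.sin ((3/2 : ℝ) * x)) :=
    aux_sin_concave _ hsc h2map
  have hp1 : ∀ x ∈ s, 0 < Real.sin ((1/2 : ℝ) * x) := by
    rintro x ⟨h1, h2⟩
    exact Real.sin_pos_of_pos_of_lt_pi (by linarith) (by linarith)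
  have hp2 : ∀ x ∈ s, 0 < Real.sin ((3/2 : ℝ) * x) := by
    rintro x ⟨h1, h2⟩
    exact Real.sin_pos_of_pos_of_lt_pi (by linarith) (by linarith)
  have hv1 : ConvexOn ℝ s (fun x => Real.sin ((1/2 : ℝ) * x) ^ lam) :=
    aux_comp_rpow_neg hlam hc1 hp1
  have hv2 : ConvexOn ℝ s (fun x => Real.sin ((3/2 : ℝ) * x) ^ lam) :=
    aux_comp_rpow_neg hlam hc2 hp2
  have hsum : ConvexOn ℝ s
      (fun x => 2 * Real.sin ((1/2 : ℝ) * x) ^ lam + Real.sin ((3/2 : ℝ) * x) ^ lam) := by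
    have := (hv1.smul (by norm_num : (0:ℝ) ≤ 2)).add hv2
    refine this.congr fun x hx => ?_
    simp [smul_eq_mul]
  have hfinal := hsum.smul (Real.rpow_nonneg (by norm_num : (0:ℝ) ≤ 2) lam)
  refine hfinal.congr fun x hx => ?_
  simp only [smul_eq_mul]
  rw [show (1/2:ℝ) * x = x / 2 by ring, show (3/2:ℝ) * x = 3 * x / 2 by ring]
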